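/- If X and Y are isomorphic normed spaces, then c_n(X) ≤ d(X,Y)^n · c_n(Y), where d(X,Y) is the Banach–Mazur distance. -/

import Mathlib

open scoped BigOperators

/-- `sup_{‖x‖≤1} |∏ⱼ fⱼ(x)|` for functionals `f₁,…,fₙ`. -/
noncomputable def supNormProd {𝕜 X : Type*} [RCLike 𝕜] [NormedAddCommGroup X]
    [NormedSpace 𝕜 X] {n : ℕ} (f : Fin n → (X →L[𝕜] 𝕜)) : ℝ :=
  sSup {t : ℝ | ∃ x : X, ‖x‖ ≤ 1 ∧ t = ‖∏ j, f j x‖}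

/-- The n-th linear polarization constant
`cₙ(X) = 1 / inf_{f₁,…,fₙ ∈ S_{X*}} sup_{‖x‖≤1} |∏ⱼ fⱼ(x)|`. -/
noncomputable def polarizationConst (𝕜 X : Type*) [RCLike 𝕜] [NormedAddCommGroup X]
    [NormedSpace 𝕜 X] (n : ℕ) : ℝ :=
  (sInf {y : ℝ | ∃ f : Fin n → (X →L[𝕜] 𝕜), (∀ j, ‖f j‖ = 1) ∧ y = supNormProd f})⁻¹

section Aux

variable {𝕜 X Y : Type*} [RCLike 𝕜] [NormedAddCommGroup X] [NormedSpace 𝕜 X]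
  [NormedAddCommGroup Y] [NormedSpace 𝕜 Y] {n : ℕ}

lemma bddAbove_aux (f : Fin n → (X →L[𝕜] 𝕜)) :
    BddAbove {t : ℝ | ∃ x : X, ‖x‖ ≤ 1 ∧ t = ‖∏ j, f j x‖} := by
  refine ⟨∏ j, ‖f j‖, ?_⟩
  rintro t ⟨x, hx, rfl⟩
  rw [norm_prod]
  exact Finset.prod_le_prod (fun j _ => norm_nonneg _)
    (fun j _ => (f j).unit_le_opNorm x hx)

lemma le_supNormProd (f : Fin n → (X →L[𝕜] 𝕜)) {x : X} (hx : ‖x‖ ≤ 1) :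
    ‖∏ j, f j x‖ ≤ supNormProd f :=
  le_csSup (bddAbove_aux f) ⟨x, hx, rfl⟩

lemma supNormProd_nonneg (f : Fin n → (X →L[𝕜] 𝕜)) : 0 ≤ supNormProd f :=
  Real.sSup_nonneg (by rintro t ⟨x, hx, rfl⟩; exact norm_nonneg _)

lemma supNormProd_le (f : Fin n → (X →L[𝕜] 𝕜)) {C : ℝ} (hC : 0 ≤ C)
    (h : ∀ x : X, ‖x‖ ≤ 1 → ‖∏ j, f j x‖ ≤ C) : supNormProd f ≤ C :=
  Real.sSup_le (by rintro t ⟨x, hx, rfl⟩; exact h x hx) hC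

lemma cle_norm_pos [Nontrivial X] (u : X ≃L[𝕜] Y) : 0 < ‖(u : X →L[𝕜] Y)‖ := by
  rcases (norm_nonneg (u : X →L[𝕜] Y)).eq_or_lt with h0 | h0
  · exfalso
    obtain ⟨x, hx⟩ := exists_ne (0 : X)
    have h1 : (u : X →L[𝕜] Y) = 0 := by
      rwa [eq_comm, ContinuousLinearMap.opNorm_zero_iff] at h0
    have h2 : u x = 0 := by
      have := ContinuousLinearMap.ext_iff.1 h1 x
      simpa using this
    exact hx (u.injective (by simpa using h2))
  · exact h0

lemma key_lemma [Nontrivial X] (u : X ≃L[𝕜] Y) (g : Fin n → (X →L[𝕜] 𝕜))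
    (hg : ∀ j, ‖g j‖ = 1) :
    ∃ f : Fin n → (Y →L[𝕜] 𝕜), (∀ j, ‖f j‖ = 1) ∧
      supNormProd f ≤
        (‖(u : X →L[𝕜] Y)‖ * ‖(u.symm : Y →L[𝕜] X)‖) ^ n * supNormProd g := by
  haveI : Nontrivial Y := u.toEquiv.symm.nontrivial
  set cu := ‖(u : X →L[𝕜] Y)‖ with hcu
  set cv := ‖(u.symm : Y →L[𝕜] X)‖ with hcv
  have hcu0 : 0 < cu := cle_norm_pos u
  have hcv0 : 0 < cv := cle_norm_pos u.symm
  set T : Fin n → (Y →L[𝕜] 𝕜) := fun j => (g j).comp (u.symm : Y →L[𝕜] X) with hTdef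
  have hT1 : ∀ j, 1 ≤ ‖T j‖ * cu := by
    intro j
    rw [← hg j]
    refine ContinuousLinearMap.opNorm_le_bound _
      (mul_nonneg (norm_nonneg _) hcu0.le) (fun x => ?_)
    have h1 : g j x = T j (u x) := by
      simp [hTdef]
    calc ‖g j x‖ = ‖T j (u x)‖ := by rw [h1]
      _ ≤ ‖T j‖ * ‖u x‖ := (T j).le_opNorm _
      _ ≤ ‖T j‖ * (cu * ‖x‖) := by
          refine mul_le_mul_of_nonneg_left ?_ (norm_nonneg _)
          exact (u : X →L[𝕜] Y).le_opNorm x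
      _ = ‖T j‖ * cu * ‖x‖ := by ring
  have hTpos : ∀ j, 0 < ‖T j‖ := by
    intro j
    rcases (norm_nonneg (T j)).eq_or_lt with h0 | h0
    · exfalso; have := hT1 j; rw [← h0] at this; simp at this; linarith
    · exact h0
  have hTinv : ∀ j, ‖T j‖⁻¹ ≤ cu := by
    intro j
    rw [← one_div, div_le_iff₀ (hTpos j)]
    linarith [hT1 j, mul_comm (‖T j‖) cu]
  refine ⟨fun j => ((‖T j‖ : 𝕜))⁻¹ • T j, fun j => ?_, ?_⟩
  · show ‖((‖T j‖ : 𝕜))⁻¹ • T j‖ = 1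
    rw [norm_smul ((‖T j‖ : 𝕜))⁻¹ (T j), norm_inv, RCLike.norm_ofReal,
      abs_of_nonneg (norm_nonneg _), inv_mul_cancel₀ (hTpos j).ne']
  · refine supNormProd_le _ (mul_nonneg (pow_nonneg (mul_nonneg hcu0.le hcv0.le) n)
      (supNormProd_nonneg g)) (fun y hy => ?_)
    have hcvk : ((cv : 𝕜)) ≠ 0 := RCLike.ofReal_ne_zero.2 hcv0.ne'
    set x' : X := ((cv : 𝕜))⁻¹ • ((u.symm : Y →L[𝕜] X) y) with hx'def
    have hx' : ‖x'‖ ≤ 1 := by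
      rw [hx'def, norm_smul, norm_inv, RCLike.norm_ofReal, abs_of_nonneg hcv0.le]
      have h1 : ‖(u.symm : Y →L[𝕜] X) y‖ ≤ cv := (u.symm : Y →L[𝕜] X).unit_le_opNorm y hy
      calc cv⁻¹ * ‖(u.symm : Y →L[𝕜] X) y‖ ≤ cv⁻¹ * cv :=
            mul_le_mul_of_nonneg_left h1 (inv_nonneg.2 hcv0.le)
        _ = 1 := inv_mul_cancel₀ hcv0.ne'
    have hval : ∀ j, (((‖T j‖ : 𝕜))⁻¹ • T j) y = ((‖T j‖ : 𝕜))⁻¹ • (((cv : 𝕜)) • (g j x')) := by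
      intro j
      have h2 : (u.symm : Y →L[𝕜] X) y = ((cv : 𝕜)) • x' := (smul_inv_smul₀ hcvk _).symm
      rw [ContinuousLinearMap.smul_apply]
      congr 1
      rw [hTdef]
      simp only [ContinuousLinearMap.comp_apply, h2]
      exact (g j).map_smul _ _
    calc ‖∏ j, (((‖T j‖ : 𝕜))⁻¹ • T j) y‖ = ∏ j, ‖(((‖T j‖ : 𝕜))⁻¹ • T j) y‖ := norm_prod _ _
      _ = ∏ j, (‖T j‖⁻¹ * cv) * ‖g j x'‖ := by
          refine Finset.prod_congr rfl (fun j _ => ?_)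
          rw [hval j, norm_smul, norm_smul, norm_inv, RCLike.norm_ofReal, RCLike.norm_ofReal,
            abs_of_nonneg (norm_nonneg _), abs_of_nonneg hcv0.le]
          ring
      _ = (∏ j, (‖T j‖⁻¹ * cv)) * ∏ j, ‖g j x'‖ := Finset.prod_mul_distrib
      _ ≤ (cu * cv) ^ n * supNormProd g := by
          refine mul_le_mul ?_ ?_ ?_ (pow_nonneg (mul_nonneg hcu0.le hcv0.le) n)
          · calc (∏ _j : Fin n, (‖T _j‖⁻¹ * cv)) ≤ ∏ _j : Fin n, (cu * cv) :=
                Finset.prod_le_prod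
                  (fun j _ => mul_nonneg (inv_nonneg.2 (norm_nonneg _)) hcv0.le)
                  (fun j _ => mul_le_mul_of_nonneg_right (hTinv j) hcv0.le)
              _ = (cu * cv) ^ n := by
                  rw [Finset.prod_const, Finset.card_univ, Fintype.card_fin]
          · calc (∏ j, ‖g j x'‖) = ‖∏ j, g j x'‖ := (norm_prod _ _).symm
              _ ≤ supNormProd g := le_supNormProd g hx'
          · exact Finset.prod_nonneg (fun j _ => norm_nonneg _)

lemma step_lemma [Nontrivial X] (u : X ≃L[𝕜] Y) (n : ℕ) :
    sInf {y : ℝ | ∃ f : Fin n → (Y →L[𝕜] 𝕜), (∀ j, ‖f j‖ = 1) ∧ y = supNormProd f} ≤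
      (‖(u : X →L[𝕜] Y)‖ * ‖(u.symm : Y →L[𝕜] X)‖) ^ n *
        sInf {y : ℝ | ∃ g : Fin n → (X →L[𝕜] 𝕜), (∀ j, ‖g j‖ = 1) ∧ y = supNormProd g} := by
  haveI : Nontrivial Y := u.toEquiv.symm.nontrivial
  set A := {y : ℝ | ∃ g : Fin n → (X →L[𝕜] 𝕜), (∀ j, ‖g j‖ = 1) ∧ y = supNormProd g} with hA
  set B := {y : ℝ | ∃ f : Fin n → (Y →L[𝕜] 𝕜), (∀ j, ‖f j‖ = 1) ∧ y = supNormProd f} with hB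
  set d := ‖(u : X →L[𝕜] Y)‖ * ‖(u.symm : Y →L[𝕜] X)‖ with hd
  have hd0 : 0 < d := mul_pos (cle_norm_pos u) (cle_norm_pos u.symm)
  have hdn : 0 < d ^ n := pow_pos hd0 n
  have hAne : A.Nonempty := by
    obtain ⟨x, hx⟩ := exists_ne (0 : X)
    obtain ⟨g, hg1, -⟩ := exists_dual_vector 𝕜 x (norm_ne_zero_iff.2 hx)
    exact ⟨supNormProd (fun _ : Fin n => g), fun _ : Fin n => g, fun _ => hg1, rfl⟩
  have hBdd : BddBelow B := ⟨0, by rintro t ⟨f, hf, rfl⟩; exact supNormProd_nonneg f⟩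
  have hkey : ∀ a ∈ A, sInf B ≤ d ^ n * a := by
    rintro _ ⟨g, hg, rfl⟩
    obtain ⟨f, hf1, hf2⟩ := key_lemma u g hg
    exact le_trans (csInf_le hBdd ⟨f, hf1, rfl⟩) hf2
  have h2 : sInf B / d ^ n ≤ sInf A := by
    refine le_csInf hAne (fun a ha => ?_)
    rw [div_le_iff₀ hdn]
    calc sInf B ≤ d ^ n * a := hkey a ha
      _ = a * d ^ n := mul_comm _ _
  rw [mul_comm]
  exact (div_le_iff₀ hdn).1 h2

end Aux

/-- `cₙ(X) ≤ d(X,Y)ⁿ · cₙ(Y)` where `d(X,Y)` is the Banach–Mazur distance. -/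
theorem polarizationConst_le_banachMazur {𝕜 X Y : Type*} [RCLike 𝕜]
    [NormedAddCommGroup X] [NormedSpace 𝕜 X] [NormedAddCommGroup Y] [NormedSpace 𝕜 Y]
    [Nontrivial X] (h : Nonempty (X ≃L[𝕜] Y)) (n : ℕ) :
    polarizationConst 𝕜 X n ≤
      (sInf {d : ℝ | ∃ e : X ≃L[𝕜] Y,
          d = ‖(e : X →L[𝕜] Y)‖ * ‖(e.symm : Y →L[𝕜] X)‖}) ^ n *
        polarizationConst 𝕜 Y n := by
  obtain ⟨e⟩ := h
  haveI : Nontrivial Y := e.toEquiv.symm.nontrivial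
  unfold polarizationConst
  set S := {d : ℝ | ∃ e : X ≃L[𝕜] Y,
      d = ‖(e : X →L[𝕜] Y)‖ * ‖(e.symm : Y →L[𝕜] X)‖} with hS
  set A := {y : ℝ | ∃ f : Fin n → (X →L[𝕜] 𝕜), (∀ j, ‖f j‖ = 1) ∧ y = supNormProd f} with hA
  set B := {y : ℝ | ∃ f : Fin n → (Y →L[𝕜] 𝕜), (∀ j, ‖f j‖ = 1) ∧ y = supNormProd f} with hB
  set D := sInf S with hD
  have hSne : S.Nonempty := ⟨_, e, rfl⟩
  have hS1 : ∀ d ∈ S, 1 ≤ d := by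
    rintro _ ⟨e', rfl⟩
    have hid : (ContinuousLinearMap.id 𝕜 X) =
        (e'.symm : Y →L[𝕜] X).comp (e' : X →L[𝕜] Y) := by
      ext x; simp
    calc (1 : ℝ) = ‖ContinuousLinearMap.id 𝕜 X‖ := (ContinuousLinearMap.norm_id).symm
      _ ≤ ‖(e'.symm : Y →L[𝕜] X)‖ * ‖(e' : X →L[𝕜] Y)‖ := by
          rw [hid]; exact ContinuousLinearMap.opNorm_comp_le _ _
      _ = ‖(e' : X →L[𝕜] Y)‖ * ‖(e'.symm : Y →L[𝕜] X)‖ := mul_comm _ _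
  have hSbdd : BddBelow S := ⟨1, fun d hd => hS1 d hd⟩
  have ha0 : 0 ≤ sInf A :=
    Real.sInf_nonneg (by rintro t ⟨f, hf, rfl⟩; exact supNormProd_nonneg f)
  have hb0 : 0 ≤ sInf B :=
    Real.sInf_nonneg (by rintro t ⟨f, hf, rfl⟩; exact supNormProd_nonneg f)
  have hstep : ∀ d ∈ S, sInf B ≤ d ^ n * sInf A := by
    rintro _ ⟨e', rfl⟩
    exact step_lemma e' n
  have hDT : 1 ≤ D ∧ sInf B ≤ D ^ n * sInf A := by
    have hclosed : IsClosed {x : ℝ | 1 ≤ x ∧ sInf B ≤ x ^ n * sInf A} := by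
      have : {x : ℝ | 1 ≤ x ∧ sInf B ≤ x ^ n * sInf A} =
          {x : ℝ | 1 ≤ x} ∩ {x : ℝ | sInf B ≤ x ^ n * sInf A} := rfl
      rw [this]
      exact (isClosed_le continuous_const continuous_id).inter
        (isClosed_le continuous_const ((continuous_pow n).mul continuous_const))
    have hsub : S ⊆ {x : ℝ | 1 ≤ x ∧ sInf B ≤ x ^ n * sInf A} :=
      fun d hd => ⟨hS1 d hd, hstep d hd⟩
    exact (closure_minimal hsub hclosed) (csInf_mem_closure hSne hSbdd)
  obtain ⟨hD1, hDba⟩ := hDT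
  have hab : sInf A ≤
      (‖(e.symm : Y →L[𝕜] X)‖ * ‖((e.symm).symm : X →L[𝕜] Y)‖) ^ n * sInf B :=
    step_lemma e.symm n
  rcases ha0.eq_or_lt with hApos | hApos
  · have hBz : sInf B = 0 := by
      refine le_antisymm ?_ hb0
      calc sInf B ≤ D ^ n * sInf A := hDba
        _ = 0 := by rw [← hApos]; ring
    rw [← hApos, hBz]
    simp
  · have hBpos : 0 < sInf B := by
      rcases hb0.eq_or_lt with hBz | hBz
      · exfalso
        rw [← hBz] at hab
        simp at hab
        linarith
      · exact hBz
    rw [← one_div, ← one_div, mul_one_div, div_le_div_iff₀ hApos hBpos, one_mul]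
    exact hDba
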